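/- Let H be a subgroup of the symmetric group of a finite set Δ acting transitively on Δ with |Δ| ≥ 2, and let K be a subgroup of the symmetric group of a nonempty finite set Γ. Let W be the subgroup of the symmetric group of the set Fun(Γ, Δ) of all functions from Γ to Δ consisting of all permutations π for which there exist σ ∈ K and h : Γ → H such that (π(f))(γ) = h(γ) • f(σ⁻¹ • γ) for every f : Γ → Δ and every γ ∈ Γ (the wreath product H ≀ K in product action). Then for every subgroup G ≤ W acting transitively on Fun(Γ, Δ) one has m(G) ≤ m(H)^{|Γ|}. -/

import Mathlib

open Pointwise

/-- A subset `A` of `Ω` is *non-self-separable* for the action of `G` if every translate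
`g • A` meets `A`. -/
def NonSelfSep (G : Type*) [Group G] {Ω : Type*} [MulAction G Ω] (A : Set Ω) : Prop :=
  ∀ g : G, (A ∩ g • A).Nonempty

/-- `mParam G Ω` is the minimum cardinality of a non-self-separable subset of `Ω`. -/
noncomputable def mParam (G Ω : Type*) [Group G] [MulAction G Ω] : ℕ :=
  sInf {k | ∃ A : Set Ω, A.ncard = k ∧ NonSelfSep G A}

/-- Let `H` be a transitive subgroup of `Sym(Δ)` with `|Δ| ≥ 2`, and `K`
a subgroup of `Sym(Γ)` with `Γ` finite and nonempty.  If `G` is a transitive subgroup of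
`Sym(Fun(Γ, Δ))` all of whose elements have the form `f ↦ (γ ↦ h(γ) (f (σ⁻¹ γ)))` with
`σ ∈ K` and `h : Γ → H` (i.e. `G` is contained in the wreath product `H ≀ K` in product
action), then `m(G) ≤ m(H) ^ |Γ|`. -/
theorem stmt6 (Δ Γ : Type*) [Fintype Δ] [Fintype Γ] [Nonempty Γ]
    (hΔ : 2 ≤ Fintype.card Δ)
    (H : Subgroup (Equiv.Perm Δ)) (hH : MulAction.IsPretransitive H Δ)
    (K : Subgroup (Equiv.Perm Γ))
    (G : Subgroup (Equiv.Perm (Γ → Δ)))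
    (hGW : ∀ π ∈ G, ∃ σ ∈ K, ∃ h : Γ → Equiv.Perm Δ, (∀ γ, h γ ∈ H) ∧
      ∀ (f : Γ → Δ) (γ : Γ), π f γ = h γ (f (σ⁻¹ γ)))
    (hG : MulAction.IsPretransitive G (Γ → Δ)) :
    mParam G (Γ → Δ) ≤ mParam H Δ ^ Fintype.card Γ := by
  classical
  have hΔne : Nonempty Δ := Fintype.card_pos_iff.mp (by omega)
  -- the defining set for `mParam H Δ` is nonempty
  have hSne : {k | ∃ A : Set Δ, A.ncard = k ∧ NonSelfSep H A}.Nonempty := by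
    refine ⟨(Set.univ : Set Δ).ncard, Set.univ, rfl, fun g => ?_⟩
    simp [Set.smul_set_univ, Set.univ_nonempty]
  obtain ⟨A, hAcard, hA⟩ := Nat.sInf_mem hSne
  -- the "box" B = A^Γ
  set B : Set (Γ → Δ) := Set.univ.pi (fun _ => A) with hB
  have hBcard : B.ncard = mParam H Δ ^ Fintype.card Γ := by
    have : B = ↑(Fintype.piFinset (fun _ : Γ => A.toFinset)) := by
      ext f; simp [hB, Set.mem_pi]
    rw [this, Set.ncard_coe_finset, Fintype.card_piFinset, Finset.prod_const,
      Finset.card_univ, ← Set.ncard_eq_toFinset_card', hAcard]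
    rfl
  have hBns : NonSelfSep G B := by
    intro π
    obtain ⟨σ, hσ, h, hh, heq⟩ := hGW (π : Equiv.Perm (Γ → Δ)) π.2
    have hx : ∀ γ : Γ, ∃ x, x ∈ A ∧ h γ x ∈ A := by
      intro γ
      obtain ⟨x, hx1, y, hy, hxy⟩ := hA (⟨h γ, hh γ⟩ : H)⁻¹
      refine ⟨x, hx1, ?_⟩
      have : x = (⟨h γ, hh γ⟩ : H)⁻¹ • y := hxy.symm
      have h2 : (⟨h γ, hh γ⟩ : H) • x = y := by rw [this, smul_inv_smul]
      have h3 : h γ x = (⟨h γ, hh γ⟩ : H) • x := rfl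
      rw [h3, h2]; exact hy
    choose x hxA hxhA using hx
    set f : Γ → Δ := fun δ => x (σ δ) with hf
    have hfB : f ∈ B := by intro γ _; exact hxA _
    have hπfB : (π : Equiv.Perm (Γ → Δ)) f ∈ B := by
      intro γ _
      have := heq f γ
      simp only [hf] at this
      rw [this, ← Equiv.Perm.mul_apply, mul_inv_cancel, Equiv.Perm.one_apply]
      exact hxhA γ
    exact ⟨(π : Equiv.Perm (Γ → Δ)) f, hπfB, f, hfB, rfl⟩
  calc mParam G (Γ → Δ) ≤ B.ncard := Nat.sInf_le ⟨B, rfl, hBns⟩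
    _ = _ := hBcard
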